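/- arXiv:1209.2078 — 5 statements merged into one kernel-verified Lean document; each statement's English description precedes it below -/
import Mathlib

section
/- Let z be a nonreal complex number with |z| = 1 and let k be a positive natural number. The number of k-th roots of z lying in the open upper half-plane equals k/2 if k is even, (k+1)/2 if k is odd and Im z > 0, and (k-1)/2 if k is odd and Im z < 0. -/
open Real

lemma sin_pos_iff_aux {x : ℝ} (h1 : -π < x) (h2 : x < 2*π) :
    0 < Real.sin x ↔ 0 < x ∧ x < π := by
  constructor
  · intro h
    constructor
    · by_contra hx
      push_neg at hx
      exact absurd h (not_lt.2 (Real.sin_nonpos_of_nonpos_of_neg_pi_le hx h1.le))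
    · by_contra hx
      push_neg at hx
      have h3 : Real.sin (x - π) = -Real.sin x := by
        rw [← Real.sin_pi_sub x, ← Real.sin_neg]; ring_nf
      have h4 : 0 ≤ Real.sin (x - π) :=
        Real.sin_nonneg_of_nonneg_of_le_pi (by linarith) (by linarith)
      linarith
  · exact fun ⟨a, b⟩ => Real.sin_pos_of_pos_of_lt_pi a b

set_option maxHeartbeats 1000000 in
/-- The number of `k`-th roots of a nonreal unimodular complex number `z` in the
open upper half-plane: `k/2` if `k` is even, `(k+1)/2` if `k` is odd and `Im z > 0`,
and `(k-1)/2` if `k` is odd and `Im z < 0`. -/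
theorem stmt_1 (z : ℂ) (hz : z.im ≠ 0) (hz1 : ‖z‖ = 1) (k : ℕ) (hk : 0 < k) :
    Set.ncard {w : ℂ | w ^ k = z ∧ 0 < w.im} =
      if k % 2 = 0 then k / 2
      else if 0 < z.im then (k + 1) / 2 else (k - 1) / 2 := by
  have hπ := Real.pi_pos
  set θ := Complex.arg z with hθdef
  have hθ1 : -π < θ := Complex.neg_pi_lt_arg z
  have hθpi : θ ≠ π := fun h => hz (Complex.arg_eq_pi_iff.mp h).2
  have hθ2 : θ < π := lt_of_le_of_ne (Complex.arg_le_pi z) hθpi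
  have hθ0 : θ ≠ 0 := fun h => hz (Complex.arg_eq_zero_iff.mp h).2
  have hkR : (0:ℝ) < (k:ℝ) := by exact_mod_cast hk
  have hkC : (k:ℂ) ≠ 0 := Nat.cast_ne_zero.mpr hk.ne'
  have hk1R : (1:ℝ) ≤ (k:ℝ) := by exact_mod_cast hk
  have hzexp : Complex.exp ((θ:ℂ) * Complex.I) = z := by
    have h := Complex.norm_mul_exp_arg_mul_I z
    rw [hz1] at h
    simpa using h
  set g : ℤ → ℂ := fun n => Complex.exp ((((θ + 2*π*n)/k : ℝ) : ℂ) * Complex.I) with hgdef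
  have hgpow : ∀ n : ℤ, g n ^ k = z := by
    intro n
    rw [hgdef]
    simp only
    rw [← Complex.exp_nat_mul]
    have : (k : ℂ) * ((((θ + 2*π*n)/k : ℝ) : ℂ) * Complex.I)
        = (θ:ℂ) * Complex.I + (n:ℂ) * (2 * (π:ℂ) * Complex.I) := by
      push_cast
      field_simp
    rw [this, Complex.exp_add, hzexp, Complex.exp_int_mul_two_pi_mul_I, mul_one]
  have hgim : ∀ n : ℤ, (g n).im = Real.sin ((θ + 2*π*n)/k) := by
    intro n
    rw [hgdef]
    exact Complex.exp_ofReal_mul_I_im _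
  have hkZ : (0:ℤ) < (k:ℤ) := by exact_mod_cast hk
  have hginj : Set.InjOn g (Set.Ico (0:ℤ) k) := by
    intro m hm n hn h
    rw [hgdef] at h
    simp only at h
    rw [Complex.exp_eq_exp_iff_exists_int] at h
    obtain ⟨t, ht⟩ := h
    have him : (θ + 2*π*m)/k = (θ + 2*π*n)/k + t * (2*π) := by
      have := congrArg Complex.im ht
      simpa using this
    have hmn : (m:ℝ) = n + t * k := by
      field_simp at him
      nlinarith [him]
    have heq : m = n + t * k := by exact_mod_cast hmn
    simp only [Set.mem_Ico] at hm hn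
    have ht0 : t = 0 := by
      by_contra h0
      rcases lt_or_gt_of_ne h0 with h1 | h1
      · have : t ≤ -1 := by omega
        nlinarith [hm.1, hm.2, hn.1, hn.2]
      · have : 1 ≤ t := by omega
        nlinarith [hm.1, hm.2, hn.1, hn.2]
    subst ht0
    simpa using heq
  have hroots : {w : ℂ | w ^ k = z ∧ 0 < w.im}
      = g '' {n : ℤ | n ∈ Set.Ico (0:ℤ) k ∧ 0 < (g n).im} := by
    ext w
    simp only [Set.mem_setOf_eq, Set.mem_image]
    constructor
    · rintro ⟨hwk, hwim⟩
      have habs : ‖w‖ = 1 := by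
        have h1 : ‖w‖ ^ k = 1 := by rw [← norm_pow, hwk, hz1]
        rcases (pow_eq_one_iff_cases).mp h1 with h | h | h
        · omega
        · exact h
        · nlinarith [h.1, norm_nonneg w]
      set ψ := Complex.arg w with hψdef
      have hw : Complex.exp ((ψ:ℂ) * Complex.I) = w := by
        have h := Complex.norm_mul_exp_arg_mul_I w
        rw [habs] at h
        simpa using h
      have hex : Complex.exp ((k:ℂ) * ((ψ:ℂ) * Complex.I))
          = Complex.exp ((θ:ℂ) * Complex.I) := by
        rw [Complex.exp_nat_mul, hw, hwk, hzexp]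
      rw [Complex.exp_eq_exp_iff_exists_int] at hex
      obtain ⟨m, hm⟩ := hex
      have him : (k:ℝ) * ψ = θ + m * (2*π) := by
        have := congrArg Complex.im hm
        simpa using this
      have hψeq : ψ = (θ + 2*π*m)/k := by
        field_simp
        linarith [him]
      have hdecomp : (m:ℝ) = (k:ℝ) * ((m / (k:ℤ) : ℤ) : ℝ) + ((m % (k:ℤ) : ℤ) : ℝ) := by
        exact_mod_cast congrArg (Int.cast : ℤ → ℝ) (Int.mul_ediv_add_emod m k).symm
      have hr : ((θ + 2*π*((m % (k:ℤ) : ℤ) : ℝ))/k) = ψ + ((-(m / (k:ℤ)) : ℤ) : ℝ) * (2*π) := by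
        rw [hψeq]
        push_cast
        have hkR' : (k:ℝ) ≠ 0 := hkR.ne'
        field_simp
        linear_combination (-2*π) * hdecomp
      have hgm : g (m % k) = w := by
        rw [hgdef]
        simp only
        rw [← hw, Complex.exp_eq_exp_iff_exists_int]
        refine ⟨-(m / k), ?_⟩
        have hc : (((θ + 2*π*((m % (k:ℤ) : ℤ) : ℝ))/k : ℝ) : ℂ)
            = ((ψ + ((-(m / (k:ℤ)) : ℤ) : ℝ) * (2*π) : ℝ) : ℂ) := by rw [hr]
        rw [hc]
        push_cast
        ring
      exact ⟨m % k, ⟨⟨Int.emod_nonneg _ hkZ.ne', Int.emod_lt_of_pos _ hkZ⟩,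
        by rw [hgm]; exact hwim⟩, hgm⟩
    · rintro ⟨n, ⟨hn, him⟩, rfl⟩
      exact ⟨hgpow n, him⟩
  have hcond : ∀ n : ℤ, n ∈ Set.Ico (0:ℤ) (k:ℤ) →
      (0 < (g n).im ↔ (0 < θ + 2*π*n ∧ θ + 2*π*n < π * k)) := by
    intro n hn
    simp only [Set.mem_Ico] at hn
    have hn0 : (0:ℝ) ≤ (n:ℝ) := by exact_mod_cast hn.1
    have hnk : (n:ℝ) ≤ (k:ℝ) - 1 := by
      have : (n:ℤ) ≤ (k:ℤ) - 1 := by omega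
      exact_mod_cast this
    rw [hgim]
    have hb1 : -π < (θ + 2*π*n)/k := by
      rw [lt_div_iff₀ hkR]
      nlinarith
    have hb2 : (θ + 2*π*n)/k < 2*π := by
      rw [div_lt_iff₀ hkR]
      nlinarith
    rw [sin_pos_iff_aux hb1 hb2, div_pos_iff, div_lt_iff₀ hkR]
    constructor
    · rintro ⟨h1 | h1, h2⟩
      · exact ⟨h1.1, by linarith [h2]⟩
      · linarith [h1.2]
    · rintro ⟨h1, h2⟩
      exact ⟨Or.inl ⟨h1, hkR⟩, by linarith⟩
  rw [hroots, Set.ncard_image_of_injOn (hginj.mono (fun n hn => hn.1))]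
  rcases lt_or_gt_of_ne hθ0 with hneg | hpos
  · -- θ < 0 : z.im < 0
    have hzim : z.im < 0 := Complex.arg_neg_iff.mp hneg
    have hset2 : {n : ℤ | n ∈ Set.Ico (0:ℤ) (k:ℤ) ∧ 0 < (g n).im}
        = Set.Ico (1:ℤ) ((k:ℤ)/2 + 1) := by
      ext n
      simp only [Set.mem_setOf_eq, Set.mem_Ico]
      constructor
      · rintro ⟨hn, him⟩
        rw [hcond n hn] at him
        obtain ⟨h1, h2⟩ := him
        obtain ⟨hnlo, hnhi⟩ := hn
        have hn1 : 1 ≤ n := by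
          by_contra h
          have hn0 : n = 0 := by omega
          rw [hn0] at h1
          push_cast at h1
          linarith
        have h2n : 2*n ≤ (k:ℤ) := by
          by_contra h
          push_neg at h
          have : ((k:ℝ)) + 1 ≤ 2*(n:ℝ) := by exact_mod_cast (by omega : (k:ℤ)+1 ≤ 2*n)
          nlinarith
        omega
      · rintro ⟨hn1, hn2⟩
        have h2n : 2*n ≤ (k:ℤ) := by omega
        have hnk : n < (k:ℤ) := by omega
        refine ⟨Set.mem_Ico.mpr ⟨by omega, hnk⟩, ?_⟩
        rw [hcond n (Set.mem_Ico.mpr ⟨by omega, hnk⟩)]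
        have hc : (2*(n:ℝ)) ≤ (k:ℝ) := by exact_mod_cast h2n
        have hc1 : (1:ℝ) ≤ (n:ℝ) := by exact_mod_cast hn1
        constructor <;> nlinarith
    rw [hset2, ← Finset.coe_Ico, Set.ncard_coe_finset, Int.card_Ico]
    have hnim : ¬ (0 < z.im) := by linarith
    rcases Nat.even_or_odd k with he | ho
    · have h2 : k % 2 = 0 := Nat.even_iff.mp he
      rw [if_pos h2]
      omega
    · have h2 : k % 2 = 1 := Nat.odd_iff.mp ho
      rw [if_neg (by omega : ¬ k % 2 = 0), if_neg hnim]
      omega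
  · -- θ > 0 : z.im > 0
    have hzim : 0 < z.im := by
      rcases lt_trichotomy z.im 0 with h | h | h
      · exact absurd (Complex.arg_neg_iff.mpr h) (by linarith)
      · exact absurd h hz
      · exact h
    have hset2 : {n : ℤ | n ∈ Set.Ico (0:ℤ) (k:ℤ) ∧ 0 < (g n).im}
        = Set.Ico (0:ℤ) (((k:ℤ)+1)/2) := by
      ext n
      simp only [Set.mem_setOf_eq, Set.mem_Ico]
      constructor
      · rintro ⟨hn, him⟩
        rw [hcond n hn] at him
        obtain ⟨h1, h2⟩ := him
        obtain ⟨hnlo, hnhi⟩ := hn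
        have h2n : 2*n < (k:ℤ) := by
          by_contra h
          push_neg at h
          have : ((k:ℝ)) ≤ 2*(n:ℝ) := by exact_mod_cast h
          nlinarith
        omega
      · rintro ⟨hn0, hn2⟩
        have h2n : 2*n < (k:ℤ) := by omega
        have hnk : n < (k:ℤ) := by omega
        refine ⟨Set.mem_Ico.mpr ⟨hn0, hnk⟩, ?_⟩
        rw [hcond n (Set.mem_Ico.mpr ⟨hn0, hnk⟩)]
        have hc : (2*(n:ℝ)) ≤ (k:ℝ) - 1 := by
          exact_mod_cast (by omega : 2*n ≤ (k:ℤ) - 1)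
        have hc0 : (0:ℝ) ≤ (n:ℝ) := by exact_mod_cast hn0
        constructor <;> nlinarith
    rw [hset2, ← Finset.coe_Ico, Set.ncard_coe_finset, Int.card_Ico]
    rcases Nat.even_or_odd k with he | ho
    · have h2 : k % 2 = 0 := Nat.even_iff.mp he
      rw [if_pos h2]
      omega
    · have h2 : k % 2 = 1 := Nat.odd_iff.mp ho
      rw [if_neg (by omega : ¬ k % 2 = 0), if_pos hzim]
      omega
end

section
/- If the k-th roots of a nonreal complex number z in the upper half-plane from the previous count are as stated, then for two nonreal complex numbers τ and σ whose imaginary parts have the same sign, the equations ρ^k = τ and ρ^k = σ have the same number of solutions in the open upper half-plane. -/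
open Complex Set
open scoped Real

lemma arg_bounds_pos {z : ℂ} (hz : 0 < z.im) : 0 < z.arg ∧ z.arg < π := by
  constructor
  · rcases lt_or_eq_of_le (Complex.arg_nonneg_iff.2 hz.le) with h | h
    · exact h
    · exact absurd (Complex.arg_eq_zero_iff.1 h.symm).2 hz.ne'
  · exact Complex.arg_lt_pi_iff.2 (Or.inr hz.ne')

lemma key (k : ℕ) (hk : 0 < k) (z : ℂ) (hz : z ≠ 0) :
    {ρ : ℂ | ρ ^ k = z ∧ 0 < ρ.im}.ncard
      = {j : ℕ | 0 < z.arg + 2*π*j ∧ z.arg + 2*π*j < π*k}.ncard := by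
  have hπ := Real.pi_pos
  have hkR : (0:ℝ) < k := by exact_mod_cast hk
  have hk1 : (1:ℝ) ≤ k := by exact_mod_cast hk
  set T : Set ℕ := {j : ℕ | 0 < z.arg + 2*π*j ∧ z.arg + 2*π*j < π*k} with hT
  set f : ℕ → ℂ := fun j => Complex.exp ((Complex.log z + 2*π*j*Complex.I)/k) with hf
  have hkC : (k : ℂ) ≠ 0 := Nat.cast_ne_zero.2 hk.ne'
  have him : ∀ j : ℕ, (((Complex.log z + 2*π*j*Complex.I)/k : ℂ)).im = (z.arg + 2*π*j)/k := by
    intro j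
    rw [show ((k:ℂ)) = ((k:ℝ):ℂ) by push_cast; ring, Complex.div_ofReal_im]
    simp [Complex.log_im]
  have hTk : ∀ j ∈ T, j < k := by
    intro j hj
    obtain ⟨h1, h2⟩ := hj
    by_contra hle
    push_neg at hle
    have harg : -π < z.arg := Complex.neg_pi_lt_arg z
    have hjk : (2:ℝ)*π*k ≤ 2*π*j := by
      have : (k:ℝ) ≤ j := by exact_mod_cast hle
      nlinarith
    have hpk : π*1 ≤ π*k := by gcongr
    linarith
  have himage : {ρ : ℂ | ρ ^ k = z ∧ 0 < ρ.im} = f '' T := by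
    ext ρ
    simp only [Set.mem_setOf_eq, Set.mem_image]
    constructor
    · rintro ⟨hρk, hρim⟩
      have hρ0 : ρ ≠ 0 := by
        rintro rfl
        simp [zero_pow hk.ne'] at hρk
        exact hz hρk.symm
      obtain ⟨ha1, ha2⟩ := arg_bounds_pos hρim
      have hexp : Complex.exp ((k:ℂ) * Complex.log ρ) = Complex.exp (Complex.log z) := by
        rw [Complex.exp_nat_mul, Complex.exp_log hρ0, Complex.exp_log hz, hρk]
      obtain ⟨n, hn⟩ := Complex.exp_eq_exp_iff_exists_int.1 hexp
      have hnim : (k:ℝ) * ρ.arg = z.arg + 2*π*n := by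
        have h := congrArg Complex.im hn
        rw [show ((k:ℂ)) = ((k:ℝ):ℂ) by push_cast; ring] at h
        simp [Complex.log_im, Complex.add_im, Complex.im_ofReal_mul] at h
        rw [h]; ring
      have hzargle : z.arg ≤ π := Complex.arg_le_pi z
      have hn0 : 0 ≤ n := by
        by_contra hneg
        push_neg at hneg
        have hmm : n ≤ -1 := by omega
        have : (n:ℝ) ≤ -1 := by exact_mod_cast hmm
        nlinarith [mul_pos hkR ha1]
      refine ⟨n.toNat, ⟨?_, ?_⟩, ?_⟩
      · have : (n.toNat : ℝ) = (n:ℝ) := by exact_mod_cast Int.toNat_of_nonneg hn0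
        rw [this, ← hnim]
        exact mul_pos hkR ha1
      · have : (n.toNat : ℝ) = (n:ℝ) := by exact_mod_cast Int.toNat_of_nonneg hn0
        rw [this, ← hnim]
        calc (k:ℝ) * ρ.arg < k * π := by gcongr
          _ = π * k := by ring
      · have hcast : ((n.toNat : ℕ) : ℂ) = (n:ℂ) := by exact_mod_cast Int.toNat_of_nonneg hn0
        rw [hf]
        simp only [hcast]
        have : (Complex.log z + 2*π*(n:ℂ)*Complex.I)/k = Complex.log ρ := by
          rw [div_eq_iff hkC]; linear_combination -hn
        rw [this, Complex.exp_log hρ0]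
    · rintro ⟨j, hj, rfl⟩
      constructor
      · rw [hf]
        simp only
        rw [← Complex.exp_nat_mul, mul_div_cancel₀ _ hkC, Complex.exp_add,
          Complex.exp_log hz]
        rw [show (2*(π:ℂ)*j*Complex.I) = (j:ℂ) * (2*π*Complex.I) by ring,
          Complex.exp_nat_mul_two_pi_mul_I, mul_one]
      · rw [hf]
        simp only [Complex.exp_im, him]
        apply mul_pos (Real.exp_pos _)
        apply Real.sin_pos_of_pos_of_lt_pi
        · exact div_pos hj.1 hkR
        · rw [div_lt_iff₀ hkR]; linarith [hj.2]
  rw [himage, Set.ncard_image_of_injOn]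
  intro j hj j' hj' hjj'
  obtain ⟨n, hn⟩ := Complex.exp_eq_exp_iff_exists_int.1 hjj'
  have h := congrArg Complex.im hn
  rw [Complex.add_im, him j, him j'] at h
  have him2 : ((n*(2*(π:ℂ)*Complex.I)).im) = n*(2*π) := by
    simp
  rw [him2] at h
  have hreal : (j:ℝ) = j' + k*n := by
    have h2 : (z.arg + 2*π*j) = (z.arg + 2*π*j') + (n*(2*π))*k := by
      field_simp at h
      linarith
    have := Real.pi_ne_zero
    nlinarith [h2]
  have hjj : (j:ℤ) = j' + k*n := by exact_mod_cast hreal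
  have hjk := hTk j hj
  have hj'k := hTk j' hj'
  have hkZ : (0:ℤ) < k := by exact_mod_cast hk
  have hn1 : n < 1 := by nlinarith
  have hn2 : -1 < n := by nlinarith
  have hn00 : n = 0 := by omega
  subst hn00
  simp at hjj
  omega


lemma set_pos (k : ℕ) (z : ℂ) (hz : 0 < z.im) :
    {j : ℕ | 0 < z.arg + 2*π*j ∧ z.arg + 2*π*j < π*k} = {j : ℕ | 2*j < k} := by
  have hπ := Real.pi_pos
  have h1 : 0 < z.arg := by
    rcases lt_or_eq_of_le (Complex.arg_nonneg_iff.2 hz.le) with h | h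
    · exact h
    · exact absurd (Complex.arg_eq_zero_iff.1 h.symm).2 hz.ne'
  have h2 : z.arg < π := Complex.arg_lt_pi_iff.2 (Or.inr hz.ne')
  ext j
  simp only [Set.mem_setOf_eq]
  constructor
  · rintro ⟨-, hb⟩
    have : ((2*j : ℕ) : ℝ) < k := by push_cast; nlinarith
    exact_mod_cast this
  · intro hj
    have hj' : ((2*j+1 : ℕ) : ℝ) ≤ k := by exact_mod_cast hj
    push_cast at hj'
    constructor
    · positivity
    · nlinarith
lemma set_neg (k : ℕ) (z : ℂ) (hz : z.im < 0) :
    {j : ℕ | 0 < z.arg + 2*π*j ∧ z.arg + 2*π*j < π*k} = {j : ℕ | 1 ≤ j ∧ 2*j ≤ k} := by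
  have hπ := Real.pi_pos
  have h1 : -π < z.arg := Complex.neg_pi_lt_arg z
  have h2 : z.arg < 0 := Complex.arg_neg_iff.2 hz
  ext j
  simp only [Set.mem_setOf_eq]
  constructor
  · rintro ⟨ha, hb⟩
    constructor
    · by_contra h0
      push_neg at h0
      interval_cases j
      simp at ha
      linarith
    · have : ((2*j : ℕ) : ℝ) < k + 1 := by push_cast; nlinarith
      have : (2*j : ℕ) < k + 1 := by exact_mod_cast this
      omega
  · rintro ⟨ha, hb⟩
    have ha' : (1:ℝ) ≤ j := by exact_mod_cast ha
    have hb' : ((2*j:ℕ) : ℝ) ≤ k := by exact_mod_cast hb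
    push_cast at hb'
    constructor
    · nlinarith
    · nlinarith

/-- For nonreal complex numbers `τ`, `σ` whose imaginary parts have the same sign,
the equations `ρ^k = τ` and `ρ^k = σ` have the same number of solutions in the
open upper half-plane. -/
theorem stmt_2 (k : ℕ) (hk : 0 < k) (τ σ : ℂ) (hτ : τ ≠ 0) (hσ : σ ≠ 0)
    (h : 0 < τ.im * σ.im) :
    Set.ncard {ρ : ℂ | ρ ^ k = τ ∧ 0 < ρ.im} =
      Set.ncard {ρ : ℂ | ρ ^ k = σ ∧ 0 < ρ.im} := by
  rw [key k hk τ hτ, key k hk σ hσ]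
  rcases mul_pos_iff.1 h with ⟨h1, h2⟩ | ⟨h1, h2⟩
  · rw [set_pos k τ h1, set_pos k σ h2]
  · rw [set_neg k τ h1, set_neg k σ h2]
end

section
/- Let μ₀, ..., μ_N be distributions on the two-dimensional torus whose Fourier coefficients vanish whenever one of the two frequency indices is zero, and let k, l be positive integers. Then there exist distributions φ₁, ..., φ_N with the same vanishing property, satisfying −∂₁^k φ₁ = μ₀, ∂₂^l φ_j − ∂₁^k φ_{j+1} = μ_j for j = 1, ..., N−1, and ∂₂^l φ_N = μ_N, if and only if ∑_{j=0}^N ∂₁^{jk} ∂₂^{(N−j)l} μ_j = 0. Moreover, when this condition holds the solution is unique. -/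
open Real

/-- A distribution on `𝕋²`, represented by its array of Fourier coefficients,
is *proper* if its Fourier coefficients vanish whenever one of the two frequency
indices is zero. -/
def IsProperCoeff (c : ℤ → ℤ → ℂ) : Prop := ∀ m n : ℤ, m = 0 ∨ n = 0 → c m n = 0

/-- Solvability criterion (on the level of Fourier coefficients) for the system
`−∂₁^k φ₁ = μ₀`, `∂₂^l φ_j − ∂₁^k φ_{j+1} = μ_j` (`j = 1,…,N−1`), `∂₂^l φ_N = μ_N`
in proper distributions, together with uniqueness.  The solution is encoded as a
function `φ : ℕ → ℤ → ℤ → ℂ` with the conventions `φ 0 = 0` and `φ j = 0` for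
`j > N`, so that the system reads `∂₂^l φ_j − ∂₁^k φ_{j+1} = μ_j` for `0 ≤ j ≤ N`. -/
theorem stmt_8 (N : ℕ) (hN : 0 < N) (k l : ℕ) (hk : 0 < k) (hl : 0 < l)
    (μ : ℕ → ℤ → ℤ → ℂ) (hμ : ∀ j, IsProperCoeff (μ j)) :
    (∃! φ : ℕ → ℤ → ℤ → ℂ,
        (∀ j, IsProperCoeff (φ j)) ∧ φ 0 = 0 ∧ (∀ j, N < j → φ j = 0) ∧
        ∀ j : ℕ, j ≤ N → ∀ m n : ℤ,
          (2 * π * Complex.I * n) ^ l * φ j m n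
            - (2 * π * Complex.I * m) ^ k * φ (j + 1) m n = μ j m n)
      ↔
    (∀ m n : ℤ, ∑ j ∈ Finset.range (N + 1),
        (2 * π * Complex.I * m) ^ (j * k) * (2 * π * Complex.I * n) ^ ((N - j) * l)
          * μ j m n = 0) := by
  have hbase : ∀ m : ℤ, m ≠ 0 → (2 * (π : ℂ) * Complex.I * m) ≠ 0 := by
    intro m hm
    refine mul_ne_zero (mul_ne_zero (mul_ne_zero two_ne_zero ?_) Complex.I_ne_zero) ?_
    · exact_mod_cast Real.pi_ne_zero
    · exact_mod_cast hm
  set X : ℤ → ℂ := fun m => 2 * (π : ℂ) * Complex.I * m with hX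
  -- `a m = X m ^ k`, `b n = X n ^ l`
  have ha : ∀ m : ℤ, m ≠ 0 → X m ^ k ≠ 0 := fun m hm => pow_ne_zero _ (hbase m hm)
  constructor
  · rintro ⟨φ, ⟨hp, h0, hgt, heq⟩, -⟩ m n
    have key : ∀ j ∈ Finset.range (N + 1),
        X m ^ (j * k) * X n ^ ((N - j) * l) * μ j m n
          = (fun j => X m ^ (j * k) * X n ^ ((N + 1 - j) * l) * φ j m n) j
            - (fun j => X m ^ (j * k) * X n ^ ((N + 1 - j) * l) * φ j m n) (j + 1) := by
      intro j hj
      simp only [Finset.mem_range] at hj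
      have hjN : j ≤ N := Nat.lt_succ_iff.mp hj
      rw [← heq j hjN m n]
      have e1 : (N + 1 - j) * l = (N - j) * l + l := by
        have : N + 1 - j = (N - j) + 1 := by omega
        rw [this]; ring
      have e2 : (j + 1) * k = j * k + k := by ring
      have e3 : N + 1 - (j + 1) = N - j := by omega
      simp only [e1, e2, e3, pow_add]
      ring
    rw [Finset.sum_congr rfl key, Finset.sum_range_sub']
    simp [h0, hgt (N + 1) (by omega)]
  · intro hsum
    -- the explicit solution
    set V : ℕ → ℤ → ℤ → ℂ := fun j m n =>
      -((X m ^ k)⁻¹) ^ j * ∑ i ∈ Finset.range j, X m ^ k ^ 1 ^ 1 * 0 with hV0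
    clear hV0 V
    set φ0 : ℕ → ℤ → ℤ → ℂ := fun j m n =>
      if N < j ∨ m = 0 ∨ n = 0 then 0
      else -((X m ^ k)⁻¹) ^ j *
        ∑ i ∈ Finset.range j, (X m ^ k) ^ i * (X n ^ l) ^ (j - 1 - i) * μ i m n with hφ0
    have hφ0prop : ∀ j, IsProperCoeff (φ0 j) := by
      intro j m n h
      simp only [hφ0]
      rcases h with h | h <;> simp [h]
    have hφ0zero : φ0 0 = 0 := by
      funext m n
      simp only [hφ0]
      split <;> simp
    have hφ0gt : ∀ j, N < j → φ0 j = 0 := by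
      intro j hj; funext m n; simp [hφ0, hj]
    have hφ0eq : ∀ j : ℕ, j ≤ N → ∀ m n : ℤ,
        X n ^ l * φ0 j m n - X m ^ k * φ0 (j + 1) m n = μ j m n := by
      intro j hj m n
      by_cases hm : m = 0
      · rw [hμ j m n (Or.inl hm)]; simp [hφ0, hm]
      by_cases hn : n = 0
      · rw [hμ j m n (Or.inr hn)]; simp [hφ0, hn]
      have haX := ha m hm
      have hinv : X m ^ k * (X m ^ k)⁻¹ = 1 := mul_inv_cancel₀ haX
      set a := X m ^ k with hadef
      set b := X n ^ l with hbdef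
      have hbS : ∀ j : ℕ, b * ∑ i ∈ Finset.range j, a ^ i * b ^ (j - 1 - i) * μ i m n
          = ∑ i ∈ Finset.range j, a ^ i * b ^ (j - i) * μ i m n := by
        intro j
        rw [Finset.mul_sum]
        refine Finset.sum_congr rfl fun i hi => ?_
        simp only [Finset.mem_range] at hi
        have : j - i = (j - 1 - i) + 1 := by omega
        rw [this, pow_succ]
        ring
      by_cases hjN : j = N
      · -- last equation: φ0 (N+1) = 0, use the sum condition
        subst hjN
        have hφtop : φ0 (j + 1) m n = 0 := by simp [hφ0]
        rw [hφtop, mul_zero, sub_zero]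
        simp only [hφ0, if_neg (by push_neg; exact ⟨le_refl j, hm, hn⟩ : ¬(j < j ∨ m = 0 ∨ n = 0))]
        rw [← hadef, ← hbdef]
        have hrw : b * (-(a⁻¹ ^ j) *
              ∑ i ∈ Finset.range j, a ^ i * b ^ (j - 1 - i) * μ i m n)
            = -(a⁻¹ ^ j) * (b * ∑ i ∈ Finset.range j, a ^ i * b ^ (j - 1 - i) * μ i m n) := by
          ring
        rw [hrw, hbS]
        have hs := hsum m n
        have hconv : ∀ i ∈ Finset.range (j + 1),
            X m ^ (i * k) * X n ^ ((j - i) * l) * μ i m n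
              = a ^ i * b ^ (j - i) * μ i m n := by
          intro i hi
          rw [hadef, hbdef, mul_comm i k, mul_comm (j - i) l, pow_mul, pow_mul]
        rw [Finset.sum_congr rfl hconv, Finset.sum_range_succ] at hs
        have hpart : ∑ i ∈ Finset.range j, a ^ i * b ^ (j - i) * μ i m n
            = -(a ^ j * μ j m n) := by
          have : a ^ j * b ^ (j - j) * μ j m n = a ^ j * μ j m n := by simp
          linear_combination hs - this
        rw [hpart]
        have : (a⁻¹) ^ j * a ^ j = 1 := by
          rw [← mul_pow, inv_mul_cancel₀ haX, one_pow]
        calc -a⁻¹ ^ j * -(a ^ j * μ j m n) = (a⁻¹ ^ j * a ^ j) * μ j m n := by ring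
          _ = μ j m n := by rw [this, one_mul]
      · -- middle equations: j < N
        have hjlt : j < N := lt_of_le_of_ne hj hjN
        simp only [hφ0, if_neg (by push_neg; exact ⟨hj, hm, hn⟩ : ¬(N < j ∨ m = 0 ∨ n = 0)),
          if_neg (by push_neg; exact ⟨hjlt, hm, hn⟩ : ¬(N < j + 1 ∨ m = 0 ∨ n = 0))]
        rw [← hadef, ← hbdef]
        have h1 : b * (-(a⁻¹ ^ j) * ∑ i ∈ Finset.range j, a ^ i * b ^ (j - 1 - i) * μ i m n)
            = -(a⁻¹ ^ j) * ∑ i ∈ Finset.range j, a ^ i * b ^ (j - i) * μ i m n := by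
          rw [← hbS j]; ring
        have h2 : a * (-(a⁻¹ ^ (j + 1)) *
              ∑ i ∈ Finset.range (j + 1), a ^ i * b ^ (j + 1 - 1 - i) * μ i m n)
            = -(a⁻¹ ^ j) * ∑ i ∈ Finset.range (j + 1), a ^ i * b ^ (j - i) * μ i m n := by
          have : a * -(a⁻¹ ^ (j + 1)) = -(a⁻¹ ^ j) := by
            rw [pow_succ]
            field_simp
          rw [← mul_assoc, this]
          simp
        rw [h1, h2, Finset.sum_range_succ]
        have hNjj : j - j = 0 := by omega
        rw [hNjj, pow_zero]
        have : a⁻¹ ^ j * a ^ j = 1 := by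
          rw [← mul_pow, inv_mul_cancel₀ haX, one_pow]
        calc -(a⁻¹ ^ j) * ∑ i ∈ Finset.range j, a ^ i * b ^ (j - i) * μ i m n
              - -(a⁻¹ ^ j) * ((∑ i ∈ Finset.range j, a ^ i * b ^ (j - i) * μ i m n)
                + a ^ j * 1 * μ j m n)
            = (a⁻¹ ^ j * a ^ j) * μ j m n := by ring
          _ = μ j m n := by rw [this, one_mul]
    -- uniqueness of solutions
    have huniq : ∀ ψ χ : ℕ → ℤ → ℤ → ℂ,
        ((∀ j, IsProperCoeff (ψ j)) ∧ ψ 0 = 0 ∧ (∀ j, N < j → ψ j = 0) ∧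
          ∀ j : ℕ, j ≤ N → ∀ m n : ℤ,
            X n ^ l * ψ j m n - X m ^ k * ψ (j + 1) m n = μ j m n) →
        ((∀ j, IsProperCoeff (χ j)) ∧ χ 0 = 0 ∧ (∀ j, N < j → χ j = 0) ∧
          ∀ j : ℕ, j ≤ N → ∀ m n : ℤ,
            X n ^ l * χ j m n - X m ^ k * χ (j + 1) m n = μ j m n) →
        ψ = χ := by
      rintro ψ χ ⟨hpψ, h0ψ, hgψ, heψ⟩ ⟨hpχ, h0χ, hgχ, heχ⟩
      funext j m n
      by_cases hm : m = 0
      · rw [hpψ j m n (Or.inl hm), hpχ j m n (Or.inl hm)]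
      by_cases hn : n = 0
      · rw [hpψ j m n (Or.inr hn), hpχ j m n (Or.inr hn)]
      have haX := ha m hm
      induction j with
      | zero => rw [h0ψ, h0χ]
      | succ j ih =>
        by_cases hj : N < j + 1
        · rw [hgψ _ hj, hgχ _ hj]
        · have hjN : j ≤ N := by omega
          have e1 := heψ j hjN m n
          have e2 := heχ j hjN m n
          rw [ih] at e1
          have : X m ^ k * ψ (j + 1) m n = X m ^ k * χ (j + 1) m n := by
            linear_combination e2 - e1
          exact mul_left_cancel₀ haX this
    exact ⟨φ0, ⟨hφ0prop, hφ0zero, hφ0gt, hφ0eq⟩,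
      fun ψ hψ => huniq ψ φ0 hψ ⟨hφ0prop, hφ0zero, hφ0gt, hφ0eq⟩⟩
end

section
/- Let u and v be proper distributions on the two-dimensional torus and k, l positive integers such that ∂₂^l u + ∂₁^k v = 0. Then there exists a unique proper distribution w with u = −∂₁^k w and v = ∂₂^l w. -/
open Real

/-- If proper distributions `u, v` on `𝕋²` (represented by Fourier coefficients)
satisfy `∂₂^l u + ∂₁^k v = 0`, then there is a unique proper `w` with
`u = −∂₁^k w` and `v = ∂₂^l w`. -/
theorem stmt_9 (k l : ℕ) (hk : 0 < k) (hl : 0 < l) (u v : ℤ → ℤ → ℂ)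
    (hu : IsProperCoeff u) (hv : IsProperCoeff v)
    (h : ∀ m n : ℤ,
      (2 * π * Complex.I * n) ^ l * u m n + (2 * π * Complex.I * m) ^ k * v m n = 0) :
    ∃! w : ℤ → ℤ → ℂ, IsProperCoeff w ∧
      ∀ m n : ℤ,
        u m n = -((2 * π * Complex.I * m) ^ k * w m n) ∧
        v m n = (2 * π * Complex.I * n) ^ l * w m n := by
  have ha : ∀ m : ℤ, m ≠ 0 → (2 * π * Complex.I * (m : ℂ)) ≠ 0 := by
    intro m hm
    have : (m : ℂ) ≠ 0 := Int.cast_ne_zero.mpr hm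
    simp [Real.pi_ne_zero, Complex.I_ne_zero, this, Complex.ofReal_ne_zero]
  refine ⟨fun m n => if m = 0 ∨ n = 0 then 0 else
      -(u m n / (2 * π * Complex.I * m) ^ k), ⟨?_, ?_⟩, ?_⟩
  · intro m n hmn; simp [hmn]
  · intro m n
    by_cases hmn : m = 0 ∨ n = 0
    · simp [hmn, hu m n hmn, hv m n hmn]
    · push_neg at hmn
      obtain ⟨hm, hn⟩ := hmn
      have hak := pow_ne_zero k (ha m hm)
      have hal := pow_ne_zero l (ha n hn)
      have hh := h m n
      constructor
      · simp only [hm, hn, or_self, if_false, if_neg (by tauto : ¬(m = 0 ∨ n = 0))]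
        field_simp
      · simp only [if_neg (by tauto : ¬(m = 0 ∨ n = 0))]
        field_simp
        linear_combination hh
  · intro w' ⟨hw', hw2⟩
    funext m n
    by_cases hmn : m = 0 ∨ n = 0
    · simp [hmn, hw' m n hmn]
    · push_neg at hmn
      obtain ⟨hm, hn⟩ := hmn
      have hak := pow_ne_zero k (ha m hm)
      have h1 := (hw2 m n).1
      simp only [if_neg (by tauto : ¬(m = 0 ∨ n = 0))]
      field_simp
      linear_combination h1
end

section
/- Let k, l be positive integers and τ a nonzero complex number such that i^{l−k} τ is purely imaginary. Then the function (m, n) ↦ ((2πim)^k − τ(2πin)^l)^{−1} is well defined and bounded on ℤ² \ {(0,0)}. -/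
open Real

/-- If `i^{l−k} τ` is purely imaginary (`τ ≠ 0`), then
`(m,n) ↦ ((2πim)^k − τ(2πin)^l)⁻¹` is well defined and bounded on `ℤ² \ {(0,0)}`. -/
theorem stmt_11 (k l : ℕ) (hk : 0 < k) (hl : 0 < l) (τ : ℂ) (hτ : τ ≠ 0)
    (h : (Complex.I ^ ((l : ℤ) - (k : ℤ)) * τ).re = 0) :
    ∃ C : ℝ, ∀ m n : ℤ, ¬(m = 0 ∧ n = 0) →
      (2 * π * Complex.I * m) ^ k - τ * (2 * π * Complex.I * n) ^ l ≠ 0 ∧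
      ‖((2 * π * Complex.I * m) ^ k - τ * (2 * π * Complex.I * n) ^ l)⁻¹‖ ≤ C := by
  set z : ℂ := Complex.I ^ ((l : ℤ) - (k : ℤ)) * τ with hz
  have hzne : z ≠ 0 := mul_ne_zero (zpow_ne_zero _ Complex.I_ne_zero) hτ
  have hzabs : 0 < ‖z‖ := norm_pos_iff.mpr hzne
  have hπ : (0:ℝ) < 2 * π := by positivity
  set c : ℝ := min ((2*π)^k) ((2*π)^l * ‖z‖) with hc
  have hcpos : 0 < c := lt_min (by positivity) (by positivity)
  refine ⟨c⁻¹, fun m n hmn => ?_⟩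
  set X : ℝ := (2*π*(m:ℝ))^k with hX
  set Y : ℝ := (2*π*(n:ℝ))^l with hY
  have key : (2 * π * Complex.I * m) ^ k - τ * (2 * π * Complex.I * n) ^ l
      = Complex.I ^ k * ((X : ℂ) - z * (Y : ℂ)) := by
    have hIk : (Complex.I : ℂ) ^ k * Complex.I ^ ((l:ℤ) - (k:ℤ)) = Complex.I ^ l := by
      rw [← zpow_natCast Complex.I k, ← zpow_natCast Complex.I l,
        ← zpow_add₀ Complex.I_ne_zero]
      ring_nf
    rw [hz, hX, hY, mul_sub, ← mul_assoc, ← mul_assoc, hIk]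
    push_cast
    ring
  have hnorm : ‖(2 * π * Complex.I * m) ^ k - τ * (2 * π * Complex.I * n) ^ l‖
      = ‖(X : ℂ) - z * (Y : ℂ)‖ := by
    rw [key]
    simp
  have hlow : c ≤ ‖(2 * π * Complex.I * m) ^ k - τ * (2 * π * Complex.I * n) ^ l‖ := by
    rw [hnorm]
    by_cases hm : m = 0
    · have hn : n ≠ 0 := fun hn => hmn ⟨hm, hn⟩
      have hX0 : X = 0 := by simp [hX, hm, zero_pow hk.ne']
      have hY1 : (2*π)^l ≤ |Y| := by
        rw [hY, abs_pow, abs_mul, abs_of_pos hπ]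
        apply pow_le_pow_left₀ hπ.le
        have : (1:ℝ) ≤ |(n:ℝ)| := by
          rw [← Int.cast_abs]
          exact_mod_cast Int.one_le_abs hn
        nlinarith
      have : ‖(X : ℂ) - z * (Y : ℂ)‖ = ‖z‖ * |Y| := by
        rw [hX0]
        simp [map_mul, Complex.norm_real]
      rw [this]
      calc c ≤ (2*π)^l * ‖z‖ := min_le_right _ _
        _ ≤ ‖z‖ * |Y| := by
            rw [mul_comm]
            exact mul_le_mul_of_nonneg_left hY1 hzabs.le
    · have hre : ((X : ℂ) - z * (Y : ℂ)).re = X := by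
        simp [Complex.sub_re, Complex.mul_re, h]
      have hX1 : (2*π)^k ≤ |X| := by
        rw [hX, abs_pow, abs_mul, abs_of_pos hπ]
        apply pow_le_pow_left₀ hπ.le
        have : (1:ℝ) ≤ |(m:ℝ)| := by
          rw [← Int.cast_abs]
          exact_mod_cast Int.one_le_abs hm
        nlinarith
      calc c ≤ (2*π)^k := min_le_left _ _
        _ ≤ |X| := hX1
        _ = |((X : ℂ) - z * (Y : ℂ)).re| := by rw [hre]
        _ ≤ ‖(X : ℂ) - z * (Y : ℂ)‖ := Complex.abs_re_le_norm _
  have hne : (2 * π * Complex.I * m) ^ k - τ * (2 * π * Complex.I * n) ^ l ≠ 0 := by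
    intro h0
    rw [h0] at hlow
    simp at hlow
    linarith
  refine ⟨hne, ?_⟩
  rw [norm_inv]
  exact inv_anti₀ hcpos hlow
end
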